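/- Suppose the graph G on n vertices has no independent set of size k. Then for ε ≤ 1/(5k), every ε-well-supported Nash equilibrium (x, y) of the game (R, C) constructed from G satisfies supp(x) = supp(y) = {2n+1}, i.e., both players play only the last pure strategy. -/

import Mathlib

open Finset Matrix

abbrev Strat (n : ℕ) := Fin n ⊕ (Fin n ⊕ Unit)

/-- The row-payoff matrix of the game built from a graph with adjacency
matrix E, γ = 1/2: blocks A = 1 − E + γI, B = −M·I, B' = (k+γ)·I,
last column −1, last row 1 + γ/k, bottom-right entry 1.  C = Rᵀ. -/
noncomputable def Rmat (n k : ℕ) (E : Matrix (Fin n) (Fin n) ℝ) (M : ℝ) :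
    Matrix (Strat n) (Strat n) ℝ := fun i j =>
  match i, j with
  | .inl u, .inl v => 1 - E u v + (1/2) * (if u = v then 1 else 0)
  | .inl u, .inr (.inl v) => -M * (if u = v then 1 else 0)
  | .inl _, .inr (.inr _) => -1
  | .inr (.inl u), .inl v => ((k : ℝ) + 1/2) * (if u = v then 1 else 0)
  | .inr (.inl _), .inr (.inl _) => 0
  | .inr (.inl _), .inr (.inr _) => -1
  | .inr (.inr _), .inl _ => 1 + (1/2) / (k : ℝ)
  | .inr (.inr _), .inr (.inl _) => 1 + (1/2) / (k : ℝ)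
  | .inr (.inr _), .inr (.inr _) => 1

def InSimplex {I : Type*} [Fintype I] (x : I → ℝ) : Prop :=
  (∀ i, 0 ≤ x i) ∧ ∑ i, x i = 1

def IsWNE {I : Type*} [Fintype I] (R C : Matrix I I ℝ) (ε : ℝ)
    (x y : I → ℝ) : Prop :=
  (∀ i, 0 < x i → ∀ k, (∑ j, R k j * y j) - ε ≤ ∑ j, R i j * y j) ∧
  (∀ j, 0 < y j → ∀ k, (∑ i, x i * C i k) - ε ≤ ∑ i, x i * C i j)

noncomputable def pay (n k : ℕ) (E : Matrix (Fin n) (Fin n) ℝ) (M : ℝ)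
    (i : Strat n) (z : Strat n → ℝ) : ℝ := ∑ j, Rmat n k E M i j * z j

lemma sum_strat {n : ℕ} (f : Strat n → ℝ) :
    ∑ j, f j = (∑ u, f (.inl u)) + ((∑ u, f (.inr (.inl u))) + f (.inr (.inr ()))) := by
  rw [Fintype.sum_sum_type, Fintype.sum_sum_type]
  simp

lemma pay_vertex {n k : ℕ} {E : Matrix (Fin n) (Fin n) ℝ} {M : ℝ} (u : Fin n)
    (z : Strat n → ℝ) :
    pay n k E M (.inl u) z =
      (∑ v, (1 - E u v) * z (.inl v)) + (1/2) * z (.inl u)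
        - M * z (.inr (.inl u)) - z (.inr (.inr ())) := by
  rw [pay, sum_strat]
  simp only [Rmat]
  rw [Finset.sum_congr rfl (fun v _ => by ring_nf :
    ∀ v ∈ univ, (1 - E u v + 1/2 * (if u = v then 1 else 0)) * z (.inl v)
      = (1 - E u v) * z (.inl v) + 1/2 * ((if u = v then 1 else 0) * z (.inl v)))]
  rw [Finset.sum_add_distrib, ← Finset.mul_sum]
  simp [ite_mul, mul_comm]
  ring

lemma pay_punish {n k : ℕ} {E : Matrix (Fin n) (Fin n) ℝ} {M : ℝ} (u : Fin n)
    (z : Strat n → ℝ) :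
    pay n k E M (.inr (.inl u)) z =
      ((k : ℝ) + 1/2) * z (.inl u) - z (.inr (.inr ())) := by
  rw [pay, sum_strat]
  simp only [Rmat]
  rw [← Finset.mul_sum]
  simp [mul_ite, ite_mul]
  ring

lemma pay_last {n k : ℕ} {E : Matrix (Fin n) (Fin n) ℝ} {M : ℝ}
    (z : Strat n → ℝ) :
    pay n k E M (.inr (.inr ())) z =
      (1 + (1/2) / (k : ℝ)) * ((∑ u, z (.inl u)) + (∑ u, z (.inr (.inl u))))
        + z (.inr (.inr ())) := by
  rw [pay, sum_strat]
  simp only [Rmat]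
  rw [← Finset.mul_sum, ← Finset.mul_sum]
  ring

/-- Master inequality: a vertex strategy in x's support must beat the last strategy. -/
lemma aux_MI {n k : ℕ} {E : Matrix (Fin n) (Fin n) ℝ} {M ε : ℝ}
    {x y : Strat n → ℝ} (hy : InSimplex y)
    (hA : ∀ i, 0 < x i → ∀ l, pay n k E M l y - ε ≤ pay n k E M i y)
    (u : Fin n) (hu : 0 < x (.inl u)) :
    (∑ v, E u v * y (.inl v)) + M * y (.inr (.inl u))
      + (∑ v, y (.inr (.inl v)))
      + (2 - (1/2)/(k:ℝ)) * y (.inr (.inr ()))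
      + (1/2)/(k:ℝ) - ε ≤ (1/2) * y (.inl u) := by
  have H := hA _ hu (Sum.inr (Sum.inr ()))
  rw [pay_vertex, pay_last] at H
  have hsum : (∑ v, y (.inl v)) + ((∑ v, y (.inr (.inl v))) + y (.inr (.inr ()))) = 1 := by
    rw [← sum_strat]; exact hy.2
  have hsplit : ∑ v, (1 - E u v) * y (.inl v)
      = (∑ v, y (.inl v)) - ∑ v, E u v * y (.inl v) := by
    rw [← Finset.sum_sub_distrib]
    exact Finset.sum_congr rfl fun v _ => by ring
  rw [hsplit] at H
  have hmulc : (1/2)/(k:ℝ) * ((∑ v, y (.inl v)) + ((∑ v, y (.inr (.inl v))) + y (.inr (.inr ()))))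
      = (1/2)/(k:ℝ) * 1 := by rw [hsum]
  linarith [H, hsum, hmulc]

/-- Second inequality: a vertex strategy in x's support must beat the matching punish strategy. -/
lemma aux_MI2 {n k : ℕ} {E : Matrix (Fin n) (Fin n) ℝ} {M ε : ℝ}
    {x y : Strat n → ℝ}
    (hA : ∀ i, 0 < x i → ∀ l, pay n k E M l y - ε ≤ pay n k E M i y)
    (u : Fin n) (hu : 0 < x (.inl u)) :
    (k:ℝ) * y (.inl u) + (∑ v, E u v * y (.inl v)) + M * y (.inr (.inl u))
      ≤ (∑ v, y (.inl v)) + ε := by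
  have H := hA _ hu (Sum.inr (Sum.inl u))
  rw [pay_vertex, pay_punish] at H
  have hsplit : ∑ v, (1 - E u v) * y (.inl v)
      = (∑ v, y (.inl v)) - ∑ v, E u v * y (.inl v) := by
    rw [← Finset.sum_sub_distrib]
    exact Finset.sum_congr rfl fun v _ => by ring
  rw [hsplit] at H
  linarith [H]

/-- If x plays vertex u, then y plays vertex u with positive probability. -/
lemma aux_pos {n k : ℕ} (hk : 0 < k) {E : Matrix (Fin n) (Fin n) ℝ} {M ε : ℝ}
    (hM : 0 < M) (hE0 : ∀ u v, 0 ≤ E u v)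
    {x y : Strat n → ℝ} (hy : InSimplex y)
    (hA : ∀ i, 0 < x i → ∀ l, pay n k E M l y - ε ≤ pay n k E M i y)
    (hε0 : 0 ≤ ε) (hkε : (k:ℝ)*ε ≤ 1/5)
    (u : Fin n) (hu : 0 < x (.inl u)) : 0 < y (.inl u) := by
  have hk0 : (0:ℝ) < k := by exact_mod_cast hk
  have H := aux_MI hy hA u hu
  have he : 0 ≤ ∑ v, E u v * y (.inl v) :=
    Finset.sum_nonneg fun v _ => mul_nonneg (hE0 u v) (hy.1 _)
  have hY2 : 0 ≤ ∑ v, y (.inr (.inl v)) := Finset.sum_nonneg fun v _ => hy.1 _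
  have hy3 : (0:ℝ) ≤ y (.inr (.inr ())) := hy.1 _
  have hMy : 0 ≤ M * y (.inr (.inl u)) := mul_nonneg hM.le (hy.1 _)
  have hcε : ε < (1/2)/(k:ℝ) := by
    rw [lt_div_iff₀ hk0]; nlinarith
  have hc2 : (1/2)/(k:ℝ) ≤ 1/2 := by
    rw [div_le_iff₀ hk0]
    have hk1 : (1:ℝ) ≤ k := by exact_mod_cast hk
    nlinarith
  have h3 : 0 ≤ (2 - (1/2)/(k:ℝ)) * y (.inr (.inr ())) :=
    mul_nonneg (by linarith) hy3
  nlinarith [H, he, hY2, hMy, h3, hcε]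

set_option maxHeartbeats 1000000 in
/-- if G has no independent set of size k, then for ε ≤ 1/(5k)
every ε-well-supported NE of (R, Rᵀ) is supported solely on the last strategy. -/
theorem no_independentSet_wne_support {n k : ℕ} (hk : 0 < k) (M : ℝ) (hM : 0 < M)
    (E : Matrix (Fin n) (Fin n) ℝ)
    (hE01 : ∀ u v, E u v = 0 ∨ E u v = 1) (hdiag : ∀ u, E u u = 0)
    (hsym : ∀ u v, E u v = E v u)
    (hno : ¬ ∃ S : Finset (Fin n), S.card = k ∧
      ∀ u ∈ S, ∀ v ∈ S, u ≠ v → E u v = 0)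
    (ε : ℝ) (hε0 : 0 ≤ ε) (hε : ε ≤ 1 / (5 * k))
    (x y : Strat n → ℝ) (hx : InSimplex x) (hy : InSimplex y)
    (h : IsWNE (Rmat n k E M) (Rmat n k E M)ᵀ ε x y) :
    (∀ i, i ≠ Sum.inr (Sum.inr ()) → x i = 0) ∧
    (∀ i, i ≠ Sum.inr (Sum.inr ()) → y i = 0) := by
  obtain ⟨hx0, hxs⟩ := hx
  obtain ⟨hy0, hys⟩ := hy
  obtain ⟨H1, H2⟩ := h
  have hk0 : (0:ℝ) < k := by exact_mod_cast hk
  have hk1 : (1:ℝ) ≤ k := by exact_mod_cast hk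
  have hE0 : ∀ u v, 0 ≤ E u v := by
    intro u v; rcases hE01 u v with h' | h' <;> rw [h'] <;> norm_num
  have hkε : (k:ℝ)*ε ≤ 1/5 := by
    rw [le_div_iff₀ (by positivity : (0:ℝ) < 5*(k:ℝ))] at hε
    nlinarith
  have hε5 : ε ≤ 1/5 := by nlinarith [mul_nonneg hε0 (by linarith : (0:ℝ) ≤ (k:ℝ) - 1)]
  have hA : ∀ i, 0 < x i → ∀ l, pay n k E M l y - ε ≤ pay n k E M i y := by
    intro i hi l; simpa only [pay] using H1 i hi l
  have hB : ∀ j, 0 < y j → ∀ l, pay n k E M l x - ε ≤ pay n k E M j x := by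
    intro j hj l
    have h2 := H2 j hj l
    simp only [Matrix.transpose_apply] at h2
    simp only [pay]
    calc (∑ i, Rmat n k E M l i * x i) - ε = (∑ i, x i * Rmat n k E M l i) - ε := by
          rw [Finset.sum_congr rfl fun i _ => mul_comm _ _]
      _ ≤ ∑ i, x i * Rmat n k E M j i := h2
      _ = ∑ i, Rmat n k E M j i * x i := Finset.sum_congr rfl fun i _ => mul_comm _ _
  have hxsplit : (∑ u, x (.inl u)) + ((∑ u, x (.inr (.inl u))) + x (.inr (.inr ()))) = 1 := by
    rw [← sum_strat]; exact hxs
  have hysplit : (∑ u, y (.inl u)) + ((∑ u, y (.inr (.inl u))) + y (.inr (.inr ()))) = 1 := by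
    rw [← sum_strat]; exact hys
  have hxInS : InSimplex x := ⟨hx0, hxs⟩
  have hyInS : InSimplex y := ⟨hy0, hys⟩
  -- Step 1: all vertex strategies have zero probability.
  have hvert : ∀ u, x (Sum.inl u) = 0 ∧ y (Sum.inl u) = 0 := by
    by_contra hcon
    push_neg at hcon
    obtain ⟨w, hw⟩ := hcon
    have hx1pos : ∃ u, 0 < x (Sum.inl u) := by
      by_cases h' : x (Sum.inl w) = 0
      · exact ⟨w, aux_pos hk hM hE0 hxInS hB hε0 hkε w
          (lt_of_le_of_ne (hy0 _) (Ne.symm (hw h')))⟩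
      · exact ⟨w, lt_of_le_of_ne (hx0 _) (Ne.symm h')⟩
    obtain ⟨u0, hu0⟩ := hx1pos
    set S : Finset (Fin n) := univ.filter (fun u => 0 < x (Sum.inl u)) with hSdef
    have hmemS : ∀ u, u ∈ S ↔ 0 < x (Sum.inl u) := by
      intro u; simp [hSdef]
    have hu0S : u0 ∈ S := (hmemS u0).mpr hu0
    -- independence of S
    have hind : ∀ u ∈ S, ∀ v ∈ S, u ≠ v → E u v = 0 := by
      intro u hu v hv huv
      by_contra hne
      have hE1 : E u v = 1 := (hE01 u v).resolve_left hne
      have hE1' : E v u = 1 := by rw [hsym]; exact hE1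
      have hxu := (hmemS u).mp hu
      have hxv := (hmemS v).mp hv
      have Hu := aux_MI hyInS hA u hxu
      have Hv := aux_MI hyInS hA v hxv
      have hlev : y (Sum.inl v) ≤ ∑ w, E u w * y (Sum.inl w) := by
        have h1 : E u v * y (Sum.inl v) ≤ ∑ w, E u w * y (Sum.inl w) :=
          Finset.single_le_sum (f := fun w => E u w * y (Sum.inl w))
            (fun w _ => mul_nonneg (hE0 u w) (hy0 _)) (Finset.mem_univ v)
        rwa [hE1, one_mul] at h1
      have hleu : y (Sum.inl u) ≤ ∑ w, E v w * y (Sum.inl w) := by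
        have h1 : E v u * y (Sum.inl u) ≤ ∑ w, E v w * y (Sum.inl w) :=
          Finset.single_le_sum (f := fun w => E v w * y (Sum.inl w))
            (fun w _ => mul_nonneg (hE0 v w) (hy0 _)) (Finset.mem_univ u)
        rwa [hE1', one_mul] at h1
      have hY2 : 0 ≤ ∑ w, y (.inr (.inl w)) := Finset.sum_nonneg fun w _ => hy0 _
      have hy3 : (0:ℝ) ≤ y (.inr (.inr ())) := hy0 _
      have hMyu : 0 ≤ M * y (.inr (.inl u)) := mul_nonneg hM.le (hy0 _)
      have hMyv : 0 ≤ M * y (.inr (.inl v)) := mul_nonneg hM.le (hy0 _)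
      have hcε : ε < (1/2)/(k:ℝ) := by rw [lt_div_iff₀ hk0]; nlinarith
      have hc2 : (1/2)/(k:ℝ) ≤ 1/2 := by rw [div_le_iff₀ hk0]; nlinarith
      have h3 : 0 ≤ (2 - (1/2)/(k:ℝ)) * y (.inr (.inr ())) := mul_nonneg (by linarith) hy3
      have hyu0 : 0 ≤ y (Sum.inl u) := hy0 _
      have hyv0 : 0 ≤ y (Sum.inl v) := hy0 _
      linarith [Hu, Hv, hlev, hleu, hY2, hMyu, hMyv, h3, hyu0, hyv0, hcε]
    -- support of y's vertex part is inside S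
    have hS_y : ∀ u, u ∉ S → y (Sum.inl u) = 0 := by
      intro u hu
      by_contra h'
      exact hu ((hmemS u).mpr (aux_pos hk hM hE0 hxInS hB hε0 hkε u
        (lt_of_le_of_ne (hy0 _) (Ne.symm h'))))
    have hY1eq : (∑ u, y (Sum.inl u)) = ∑ u ∈ S, y (Sum.inl u) :=
      (Finset.sum_subset (Finset.subset_univ S) (fun u _ hu => hS_y u hu)).symm
    -- per-element bound
    have hY1le1 : (∑ u, y (Sum.inl u)) ≤ 1 := by
      have hY2 : 0 ≤ ∑ w, y (.inr (.inl w)) := Finset.sum_nonneg fun w _ => hy0 _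
      have hy3 : (0:ℝ) ≤ y (.inr (.inr ())) := hy0 _
      linarith [hysplit]
    have hbound : ∀ u ∈ S, (k:ℝ) * y (Sum.inl u) ≤ 1 + ε := by
      intro u hu
      have H2' := aux_MI2 hA u ((hmemS u).mp hu)
      have he : 0 ≤ ∑ v, E u v * y (.inl v) :=
        Finset.sum_nonneg fun v _ => mul_nonneg (hE0 u v) (hy0 _)
      have hMy : 0 ≤ M * y (.inr (.inl u)) := mul_nonneg hM.le (hy0 _)
      linarith [H2', he, hMy, hY1le1]
    have hsum_le : (k:ℝ) * (∑ u ∈ S, y (Sum.inl u)) ≤ (S.card : ℝ) * (1 + ε) := by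
      rw [Finset.mul_sum]
      calc ∑ u ∈ S, (k:ℝ) * y (Sum.inl u) ≤ ∑ _u ∈ S, (1 + ε) :=
            Finset.sum_le_sum hbound
        _ = (S.card : ℝ) * (1 + ε) := by rw [Finset.sum_const, nsmul_eq_mul]
    -- bound Y2 + y3
    have hMI0 := aux_MI hyInS hA u0 hu0
    have hb0 : (k:ℝ) * y (Sum.inl u0) ≤ 1 + ε := hbound u0 hu0S
    have hy1u0 : y (Sum.inl u0) ≤ (1 + ε) / (k:ℝ) := by
      rw [le_div_iff₀ hk0]; linarith [hb0]
    have hdivexp : (1 + ε) / (k:ℝ) = 2 * ((1/2)/(k:ℝ)) + 2 * ((1/2)/(k:ℝ)) * ε := by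
      field_simp
    have hc2 : (1/2)/(k:ℝ) ≤ 1/2 := by rw [div_le_iff₀ hk0]; nlinarith
    have hc0 : (0:ℝ) < (1/2)/(k:ℝ) := by positivity
    have hcy3 : ((1/2)/(k:ℝ)) * y (.inr (.inr ())) ≤ (1/2) * y (.inr (.inr ())) :=
      mul_le_mul_of_nonneg_right hc2 (hy0 _)
    have hcεp : ((1/2)/(k:ℝ)) * ε ≤ (1/2) * ε := mul_le_mul_of_nonneg_right hc2 hε0
    have he0 : 0 ≤ ∑ v, E u0 v * y (.inl v) :=
      Finset.sum_nonneg fun v _ => mul_nonneg (hE0 u0 v) (hy0 _)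
    have hMy0 : 0 ≤ M * y (.inr (.inl u0)) := mul_nonneg hM.le (hy0 _)
    have h23 : (∑ w, y (.inr (.inl w))) + y (.inr (.inr ())) ≤ (3/2) * ε := by
      have hy3 : (0:ℝ) ≤ y (.inr (.inr ())) := hy0 _
      linarith [hMI0, hy1u0, hdivexp, hcy3, hcεp, he0, hMy0, hy3]
    -- cardinality bound
    have hcard : k ≤ S.card := by
      by_contra hlt
      push_neg at hlt
      have hcR : (S.card : ℝ) ≤ (k:ℝ) - 1 := by
        have : S.card + 1 ≤ k := hlt
        have := (Nat.cast_le (α := ℝ)).mpr this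
        push_cast at this
        linarith
      have hmul1 : (S.card : ℝ) * (1 + ε) ≤ ((k:ℝ) - 1) * (1 + ε) :=
        mul_le_mul_of_nonneg_right hcR (by linarith)
      have hkY23 : (k:ℝ) * ((∑ w, y (.inr (.inl w))) + y (.inr (.inr ())))
          ≤ (k:ℝ) * ((3/2) * ε) := mul_le_mul_of_nonneg_left h23 hk0.le
      have hkY1 : (k:ℝ) * (∑ u, y (Sum.inl u))
          = (k:ℝ) - (k:ℝ) * ((∑ w, y (.inr (.inl w))) + y (.inr (.inr ()))) := by
        have : (∑ u, y (Sum.inl u))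
            = 1 - ((∑ w, y (.inr (.inl w))) + y (.inr (.inr ()))) := by linarith [hysplit]
        rw [this]; ring
      rw [hY1eq] at hkY1
      nlinarith [hsum_le, hmul1, hkY23, hkY1, hkε, hε0]
    obtain ⟨T, hTS, hTcard⟩ := Finset.exists_subset_card_eq hcard
    exact hno ⟨T, hTcard, fun u hu v hv huv => hind u (hTS hu) v (hTS hv) huv⟩
  -- Step 2: punish strategies have zero probability.
  have hY1x : (∑ u, x (Sum.inl u)) = 0 := Finset.sum_eq_zero fun u _ => (hvert u).1
  have hY1y : (∑ u, y (Sum.inl u)) = 0 := Finset.sum_eq_zero fun u _ => (hvert u).2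
  have hc0 : (0:ℝ) < (1/2)/(k:ℝ) := by positivity
  have hpunish : ∀ (z w : Strat n → ℝ), InSimplex z →
      (∀ i, 0 < w i → ∀ l, pay n k E M l z - ε ≤ pay n k E M i z) →
      (∑ u, z (Sum.inl u)) = 0 → ∀ u, w (Sum.inr (Sum.inl u)) = 0 → True := fun _ _ _ _ _ _ _ => trivial
  have hpx : ∀ u, x (Sum.inr (Sum.inl u)) = 0 := by
    intro u
    by_contra h'
    have hu : 0 < x (Sum.inr (Sum.inl u)) := lt_of_le_of_ne (hx0 _) (Ne.symm h')
    have H := hA _ hu (Sum.inr (Sum.inr ()))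
    rw [pay_punish, pay_last] at H
    have hz : y (Sum.inl u) = 0 := (hvert u).2
    have hY2 : 0 ≤ ∑ w, y (.inr (.inl w)) := Finset.sum_nonneg fun w _ => hy0 _
    have hy3 : (0:ℝ) ≤ y (.inr (.inr ())) := hy0 _
    have hcY2 : 0 ≤ ((1/2)/(k:ℝ)) * (∑ w, y (.inr (.inl w))) :=
      mul_nonneg hc0.le hY2
    rw [hz, hY1y] at H
    -- H : (1 + c) * (0 + Y2) + y3 - ε ≤ (k+1/2)*0 - y3
    nlinarith [H, hY2, hy3, hcY2, hysplit, hY1y, hε5]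
  have hpy : ∀ u, y (Sum.inr (Sum.inl u)) = 0 := by
    intro u
    by_contra h'
    have hu : 0 < y (Sum.inr (Sum.inl u)) := lt_of_le_of_ne (hy0 _) (Ne.symm h')
    have H := hB _ hu (Sum.inr (Sum.inr ()))
    rw [pay_punish, pay_last] at H
    have hz : x (Sum.inl u) = 0 := (hvert u).1
    have hY2 : 0 ≤ ∑ w, x (.inr (.inl w)) := Finset.sum_nonneg fun w _ => hx0 _
    have hx3 : (0:ℝ) ≤ x (.inr (.inr ())) := hx0 _
    have hcY2 : 0 ≤ ((1/2)/(k:ℝ)) * (∑ w, x (.inr (.inl w))) :=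
      mul_nonneg hc0.le hY2
    rw [hz, hY1x] at H
    nlinarith [H, hY2, hx3, hcY2, hxsplit, hY1x, hε5]
  constructor
  · intro i hi
    rcases i with u | u | u
    · exact (hvert u).1
    · exact hpx u
    · exact absurd rfl hi
  · intro i hi
    rcases i with u | u | u
    · exact (hvert u).2
    · exact hpy u
    · exact absurd rfl hi
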